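/- arXiv:1706.05242 — 2 statements merged into one kernel-verified Lean document; each statement's English description precedes it below -/
import Mathlib

section
/- Let Σ=(X,U,F) be a system, Q ⊆ X nonempty, (𝒜,G) an invariant cover of Σ and Q, τ∈ℕ, and 𝒮 a (τ,Q)-spanning set in (𝒜,G). Then there exists a Q-admissible τ-periodic coder-controller H=(S,γ,δ) for Σ such that (1/τ) log₂ N(𝒮) ≥ R(H). -/
open Set Filter Topology

/-- An invariant cover `(𝒜, G)` of the system with transition function `F` and the set `Q`:
`cov` is a finite cover of `Q` by subsets of `Q` and `G` assigns to each cover element an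
input such that `F(A, G(A)) ⊆ Q`. -/
structure InvCover {X U : Type*} (F : X → U → Set X) (Q : Set X) where
  cov : Set (Set X)
  G : Set X → U
  finite : cov.Finite
  subset : ∀ A ∈ cov, A ⊆ Q
  covers : Q ⊆ ⋃₀ cov
  inv : ∀ A ∈ cov, ∀ x ∈ A, F x (G A) ⊆ Q

variable {X U : Type*}

/-- The set `P(α|_{[0;t]})` associated with `𝒮 ⊆ 𝒜^{[0;τ)}`: for `t+1 < τ` it is the set of
possible successor cover elements of the initial piece `α|_{[0;t]}`, and for `t = τ-1`
(i.e. `¬ t + 1 < τ`) it is the set `P(α)` of initial cover elements. -/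
def Pset {τ : ℕ} (𝒮 : Set (Fin τ → Set X)) (α : Fin τ → Set X) (t : ℕ) :
    Set (Set X) :=
  if ht : t + 1 < τ then
    {A | ∃ β ∈ 𝒮, (∀ t' : Fin τ, (t' : ℕ) ≤ t → β t' = α t') ∧ A = β ⟨t + 1, ht⟩}
  else
    {A | ∃ β ∈ 𝒮, ∃ h0 : 0 < τ, A = β ⟨0, h0⟩}

/-- `𝒮` is `(τ,Q)`-spanning in the invariant cover `c`. -/
def IsSpanning (F : X → U → Set X) (Q : Set X) (c : InvCover F Q) (τ : ℕ)
    (𝒮 : Set (Fin τ → Set X)) : Prop :=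
  (∀ α ∈ 𝒮, ∀ t, α t ∈ c.cov) ∧
  (∀ x ∈ Q, ∃ α ∈ 𝒮, ∃ h0 : 0 < τ, x ∈ α ⟨0, h0⟩) ∧
  (∀ α ∈ 𝒮, ∀ t : Fin τ, (t : ℕ) + 1 < τ →
    ∀ x ∈ α t, F x (c.G (α t)) ⊆ ⋃ A ∈ Pset 𝒮 α (t : ℕ), A)

/-- The expansion number `N(𝒮)`. -/
noncomputable def expNum {τ : ℕ} (𝒮 : Set (Fin τ → Set X)) : ℕ :=
  sSup {n | ∃ α ∈ 𝒮, n = ∏ t ∈ Finset.range τ, (Pset 𝒮 α t).ncard}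

/-- `r_inv(τ, Q)` : the smallest expansion number of a `(τ,Q)`-spanning set (`⊤` if no
spanning set exists). -/
noncomputable def rinv (F : X → U → Set X) (Q : Set X) (c : InvCover F Q)
    (τ : ℕ) : ℕ∞ :=
  sInf {n | ∃ 𝒮 : Set (Fin τ → Set X), IsSpanning F Q c τ 𝒮 ∧ n = (expNum 𝒮 : ℕ∞)}

/-- Base-2 logarithm `ℕ∞ → EReal`, with `log₂ ∞ = ∞`. -/
noncomputable def elog2 (m : ℕ∞) : EReal :=
  WithTop.recTopCoe ⊤ (fun n : ℕ => ((Real.logb 2 n : ℝ) : EReal)) m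

/-- The entropy `h(𝒜,G)` of an invariant cover, defined through the infimum
`inf_{τ ≥ 1} (1/τ) log₂ r_inv(τ,Q)` (which equals the limit). -/
noncomputable def coverEntropy (F : X → U → Set X) (Q : Set X)
    (c : InvCover F Q) : EReal :=
  ⨅ (τ : ℕ) (_ : 0 < τ), (((τ : ℝ)⁻¹ : ℝ) : EReal) * elog2 (rinv F Q c τ)

/-- The invariance feedback entropy `h_inv` of the system and `Q`. -/
noncomputable def invEntropy (F : X → U → Set X) (Q : Set X) : EReal :=
  ⨅ c : InvCover F Q, coverEntropy F Q c


variable {X U S : Type*}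

/-- A coder-controller `(S, γ, δ)`: at each time `t` the coder maps the state history
`X^{[0;t]}` to a symbol in `S` and the controller maps the symbol history `S^{[0;t]}`
to an input. -/
structure CoderController (X U S : Type*) where
  γ : (t : ℕ) → (Fin (t + 1) → X) → S
  δ : (t : ℕ) → (Fin (t + 1) → S) → U

/-- `Γ_t(ξ)`: the symbol sequence generated by the state sequence `ξ ∈ X^{[0;t]}`. -/
def Gam (H : CoderController X U S) (t : ℕ) (ξ : Fin (t + 1) → X) : Fin (t + 1) → S :=
  fun t' => H.γ t' (fun i : Fin ((t' : ℕ) + 1) => ξ ⟨i, by omega⟩)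

/-- `(ξ,ν)` is a trajectory of the system on `[0;∞)`. -/
def IsTraj (F : X → U → Set X) (ξ : ℕ → X) (ν : ℕ → U) : Prop :=
  ∀ t : ℕ, ξ (t + 1) ∈ F (ξ t) (ν t)

/-- `Z(ζ)`: the set of possible successor symbols of the symbol sequence `ζ ∈ S^{[0;t)}`
in the closed loop, with the convention `Z(∅) = S`. -/
def Zset (F : X → U → Set X) (H : CoderController X U S) {t : ℕ} (ζ : Fin t → S) :
    Set S :=
  if t = 0 then Set.univ
  else
    {s | ∃ ξ : ℕ → X, ∃ ν : ℕ → U, IsTraj F ξ ν ∧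
      (∀ k : Fin t, H.γ (k : ℕ) (fun i : Fin ((k : ℕ) + 1) => ξ i) = ζ k) ∧
      H.γ t (fun i : Fin (t + 1) => ξ i) = s ∧
      (∀ k : Fin t, ν (k : ℕ) = H.δ (k : ℕ) (fun i : Fin ((k : ℕ) + 1) => ζ ⟨i, by omega⟩))}

/-- `𝒵_τ`: the set of symbol sequences of length `τ` that can occur in the closed loop. -/
def ZTau (F : X → U → Set X) (H : CoderController X U S) (τ : ℕ) :
    Set (Fin τ → S) :=
  {ζ | (∀ h0 : 0 < τ, ∃ x : X, ζ ⟨0, h0⟩ = H.γ 0 (fun _ => x)) ∧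
    (∀ k : Fin τ, 0 < (k : ℕ) →
      ζ k ∈ Zset F H (fun i : Fin (k : ℕ) => ζ ⟨i, by omega⟩))}

/-- The worst-case average amount of transmitted information over the horizon `[0;τ)`. -/
noncomputable def rateAt (F : X → U → Set X) (H : CoderController X U S) (τ : ℕ) : ℝ :=
  sSup {r | ∃ ζ ∈ ZTau F H τ, r = (τ : ℝ)⁻¹ *
    ∑ k : Fin τ, Real.logb 2 ((Zset F H (fun i : Fin (k : ℕ) => ζ ⟨i, by omega⟩)).ncard)}

/-- The transmission data rate `R(H)` of a coder-controller. -/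
noncomputable def dataRate (F : X → U → Set X) (H : CoderController X U S) : ℝ :=
  Filter.limsup (fun τ : ℕ => rateAt F H τ) Filter.atTop

/-- `H` is `Q`-admissible: every closed-loop trajectory starting in `Q` remains in `Q`. -/
def QAdmissible (F : X → U → Set X) (Q : Set X) (H : CoderController X U S) : Prop :=
  ∀ (ξ : ℕ → X) (ν : ℕ → U), IsTraj F ξ ν → ξ 0 ∈ Q →
    (∀ t : ℕ, ν t = H.δ t (Gam H t (fun i : Fin (t + 1) => ξ i))) →
    ∀ t : ℕ, ξ t ∈ Q

/-- `H` is `τ`-periodic. -/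
def IsPeriodic (H : CoderController X U S) (τ : ℕ) : Prop :=
  (∀ (t : ℕ) (ξ : Fin (t + 1) → X),
    H.γ t ξ = H.γ (t % τ) (fun i : Fin (t % τ + 1) =>
      ξ ⟨τ * (t / τ) + i, by have h := Nat.div_add_mod t τ; omega⟩)) ∧
  (∀ (t : ℕ) (ζ : Fin (t + 1) → S),
    H.δ t ζ = H.δ (t % τ) (fun i : Fin (t % τ + 1) =>
      ζ ⟨τ * (t / τ) + i, by have h := Nat.div_add_mod t τ; omega⟩))

namespace Stmt13

open Real
open scoped Classical

variable {X U : Type*} {τ : ℕ}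

section Choices

variable (𝒮 : Set (Fin τ → Set X))

/-- Default element of `𝒮`. -/
noncomputable def dflt (h𝒮 : 𝒮.Nonempty) : {β : Fin τ → Set X // β ∈ 𝒮} :=
  ⟨h𝒮.choose, h𝒮.choose_spec⟩

/-- The set of initial cover elements of sequences in `𝒮`. -/
def PLast : Set (Set X) := {A | ∃ β ∈ 𝒮, ∃ h0 : 0 < τ, A = β ⟨0, h0⟩}

lemma Pset_eq_PLast (α : Fin τ → Set X) (t : ℕ) (ht : ¬ t + 1 < τ) :
    Pset 𝒮 α t = PLast 𝒮 := by
  rw [Pset, dif_neg ht]; rfl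

lemma Pset_nonempty {β : Fin τ → Set X} (hβ : β ∈ 𝒮) (hτ : 0 < τ) (r : ℕ) :
    (Pset 𝒮 β r).Nonempty := by
  rw [Pset]; split_ifs with h
  · exact ⟨β ⟨r + 1, h⟩, β, hβ, fun _ _ => rfl, rfl⟩
  · exact ⟨β ⟨0, hτ⟩, β, hβ, hτ, rfl⟩

lemma Pset_subset {cov : Set (Set X)} (hcov : ∀ α ∈ 𝒮, ∀ t, α t ∈ cov)
    (β : Fin τ → Set X) (r : ℕ) : Pset 𝒮 β r ⊆ cov := by
  rw [Pset]; split_ifs with h <;> rintro A ⟨β', hβ', h2⟩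
  · obtain ⟨-, rfl⟩ := h2; exact hcov β' hβ' _
  · obtain ⟨-, rfl⟩ := h2; exact hcov β' hβ' _

lemma Pset_congr {β β' : Fin τ → Set X} (r : ℕ) (hr : r + 1 < τ)
    (h : ∀ t' : Fin τ, (t' : ℕ) ≤ r → β t' = β' t') : Pset 𝒮 β r = Pset 𝒮 β' r := by
  rw [Pset, Pset, dif_pos hr, dif_pos hr]
  ext A
  constructor <;> rintro ⟨g, hg, hpre, hA⟩
  · exact ⟨g, hg, fun t' ht' => (hpre t' ht').trans (h t' ht'), hA⟩
  · exact ⟨g, hg, fun t' ht' => (hpre t' ht').trans (h t' ht').symm, hA⟩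

/-- Canonical element of `PLast` containing `x` (if any). -/
noncomputable def A0 (h𝒮 : 𝒮.Nonempty) (hτ : 0 < τ) (x : X) : Set X :=
  if h : ∃ A ∈ PLast 𝒮, x ∈ A then h.choose else h𝒮.choose ⟨0, hτ⟩

lemma A0_mem (h𝒮 : 𝒮.Nonempty) (hτ : 0 < τ) (x : X) : A0 𝒮 h𝒮 hτ x ∈ PLast 𝒮 := by
  rw [A0]; split_ifs with h
  · exact h.choose_spec.1
  · exact ⟨h𝒮.choose, h𝒮.choose_spec, hτ, rfl⟩

lemma mem_A0 (h𝒮 : 𝒮.Nonempty) (hτ : 0 < τ) {x : X} (h : ∃ A ∈ PLast 𝒮, x ∈ A) :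
    x ∈ A0 𝒮 h𝒮 hτ x := by
  rw [A0, dif_pos h]; exact h.choose_spec.2

/-- Canonical sequence in `𝒮` starting with `A`. -/
noncomputable def seq0 (h𝒮 : 𝒮.Nonempty) (hτ : 0 < τ) (A : Set X) :
    {β : Fin τ → Set X // β ∈ 𝒮} :=
  if h : ∃ β ∈ 𝒮, β ⟨0, hτ⟩ = A then ⟨h.choose, h.choose_spec.1⟩ else dflt 𝒮 h𝒮

lemma seq0_val (h𝒮 : 𝒮.Nonempty) (hτ : 0 < τ) {A : Set X} (hA : A ∈ PLast 𝒮) :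
    (seq0 𝒮 h𝒮 hτ A).val ⟨0, hτ⟩ = A := by
  obtain ⟨β, hβ, h0, rfl⟩ := hA
  have h : ∃ β' ∈ 𝒮, β' ⟨0, hτ⟩ = β ⟨0, h0⟩ := ⟨β, hβ, rfl⟩
  rw [seq0, dif_pos h]; exact h.choose_spec.2

/-- Initial tracked sequence. -/
noncomputable def init0 (h𝒮 : 𝒮.Nonempty) (hτ : 0 < τ) (x : X) :
    {β : Fin τ → Set X // β ∈ 𝒮} :=
  seq0 𝒮 h𝒮 hτ (A0 𝒮 h𝒮 hτ x)

lemma mem_init0 (h𝒮 : 𝒮.Nonempty) (hτ : 0 < τ) {x : X} (h : ∃ A ∈ PLast 𝒮, x ∈ A) :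
    x ∈ (init0 𝒮 h𝒮 hτ x).val ⟨0, hτ⟩ := by
  rw [init0, seq0_val 𝒮 h𝒮 hτ (A0_mem 𝒮 h𝒮 hτ x)]
  exact mem_A0 𝒮 h𝒮 hτ h

/-- Canonical element of `Pset 𝒮 β r` containing `x` (if any). -/
noncomputable def Achoose (β : Fin τ → Set X) (r : ℕ) (x : X) : Set X :=
  if h : ∃ A ∈ Pset 𝒮 β r, x ∈ A then h.choose
  else if h2 : (Pset 𝒮 β r).Nonempty then h2.choose else ∅

lemma Achoose_mem {β : Fin τ → Set X} (r : ℕ) (x : X) (h2 : (Pset 𝒮 β r).Nonempty) :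
    Achoose 𝒮 β r x ∈ Pset 𝒮 β r := by
  rw [Achoose]; split_ifs with h
  · exact h.choose_spec.1
  · exact h2.choose_spec

lemma mem_Achoose {β : Fin τ → Set X} {r : ℕ} {x : X} (h : ∃ A ∈ Pset 𝒮 β r, x ∈ A) :
    x ∈ Achoose 𝒮 β r x := by
  rw [Achoose, dif_pos h]; exact h.choose_spec.2

/-- Canonical refinement of the tracked sequence `β` whose `(r+1)`-st element is `A`. -/
noncomputable def nxtA (h𝒮 : 𝒮.Nonempty) (β : {β : Fin τ → Set X // β ∈ 𝒮}) (r : ℕ)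
    (A : Set X) : {β : Fin τ → Set X // β ∈ 𝒮} :=
  if h : ∃ β' ∈ 𝒮, (∀ t' : Fin τ, (t' : ℕ) ≤ r → β' t' = β.val t') ∧
      ∃ hr : r + 1 < τ, A = β' ⟨r + 1, hr⟩ then
    ⟨h.choose, h.choose_spec.1⟩
  else dflt 𝒮 h𝒮

lemma nxtA_spec (h𝒮 : 𝒮.Nonempty) (β : {β : Fin τ → Set X // β ∈ 𝒮}) (r : ℕ)
    {A : Set X} (hr : r + 1 < τ) (hA : A ∈ Pset 𝒮 β.val r) :
    (∀ t' : Fin τ, (t' : ℕ) ≤ r → (nxtA 𝒮 h𝒮 β r A).val t' = β.val t') ∧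
      (nxtA 𝒮 h𝒮 β r A).val ⟨r + 1, hr⟩ = A := by
  rw [Pset, dif_pos hr] at hA
  obtain ⟨β', hβ', hpre, hAe⟩ := hA
  have h : ∃ β'' ∈ 𝒮, (∀ t' : Fin τ, (t' : ℕ) ≤ r → β'' t' = β.val t') ∧
      ∃ hr' : r + 1 < τ, A = β'' ⟨r + 1, hr'⟩ := ⟨β', hβ', hpre, hr, hAe⟩
  rw [nxtA, dif_pos h]
  obtain ⟨hm, hp, hr2, hv⟩ := h.choose_spec
  exact ⟨hp, hv.symm⟩

/-- One step of the tracking recursion. -/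
noncomputable def nxt (h𝒮 : 𝒮.Nonempty) (β : {β : Fin τ → Set X // β ∈ 𝒮}) (r : ℕ)
    (x : X) : {β : Fin τ → Set X // β ∈ 𝒮} :=
  nxtA 𝒮 h𝒮 β r (Achoose 𝒮 β.val r x)

/-- The tracked sequence determined by the states observed in the current period. -/
noncomputable def trk (h𝒮 : 𝒮.Nonempty) (hτ : 0 < τ) :
    (r : ℕ) → (Fin (r + 1) → X) → {β : Fin τ → Set X // β ∈ 𝒮}
  | 0, ξ => init0 𝒮 h𝒮 hτ (ξ 0)
  | r + 1, ξ => nxt 𝒮 h𝒮 (trk h𝒮 hτ r (fun i => ξ i.castSucc)) r (ξ (Fin.last (r + 1)))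

lemma trk_succ (h𝒮 : 𝒮.Nonempty) (hτ : 0 < τ) (r : ℕ) (ξ : Fin (r + 2) → X) :
    trk 𝒮 h𝒮 hτ (r + 1) ξ =
      nxt 𝒮 h𝒮 (trk 𝒮 h𝒮 hτ r (fun i => ξ i.castSucc)) r (ξ (Fin.last (r + 1))) := rfl

lemma trk_congr (h𝒮 : 𝒮.Nonempty) (hτ : 0 < τ) {a b : ℕ} (h : a = b)
    (ξa : Fin (a + 1) → X) (ξb : Fin (b + 1) → X)
    (hξ : ∀ i : Fin (a + 1), ξa i = ξb ⟨(i : ℕ), by omega⟩) :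
    trk 𝒮 h𝒮 hτ a ξa = trk 𝒮 h𝒮 hτ b ξb := by
  subst h
  have : ξa = ξb := funext fun i => (hξ i).trans (congrArg ξb (Fin.eta i i.isLt))
  rw [this]

end Choices

end Stmt13

namespace Stmt13

variable {X U : Type*} {τ : ℕ}

section CC

variable (𝒮 : Set (Fin τ → Set X)) {S : Type}

/-- The coder-controller built from the spanning set `𝒮`. -/
noncomputable def mkCC (h𝒮 : 𝒮.Nonempty) (hτ : 0 < τ) (G : Set X → U)
    (e : {β : Fin τ → Set X // β ∈ 𝒮} ≃ S) : CoderController X U S where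
  γ := fun t ξ => e (trk 𝒮 h𝒮 hτ (t % τ) (fun i : Fin (t % τ + 1) =>
    ξ ⟨τ * (t / τ) + i, by have h := Nat.div_add_mod t τ; have h2 := i.isLt; omega⟩))
  δ := fun t ζ => G ((e.symm (ζ (Fin.last t))).val ⟨t % τ, Nat.mod_lt t hτ⟩)

variable (h𝒮 : 𝒮.Nonempty) (hτ : 0 < τ) (G : Set X → U)
  (e : {β : Fin τ → Set X // β ∈ 𝒮} ≃ S)

lemma mkCC_periodic : IsPeriodic (mkCC 𝒮 h𝒮 hτ G e) τ := by
  constructor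
  · intro t ξ
    show e _ = e _
    congr 1
    refine trk_congr 𝒮 h𝒮 hτ ?_ _ _ ?_
    · exact (Nat.mod_eq_of_lt (Nat.mod_lt t hτ)).symm
    · intro i
      show ξ _ = ξ _
      congr 1
      apply Fin.ext
      show τ * (t / τ) + (i : ℕ) = τ * (t / τ) + (τ * (t % τ / τ) + (i : ℕ))
      rw [Nat.div_eq_of_lt (Nat.mod_lt t hτ), Nat.mul_zero, Nat.zero_add]
  · intro t ζ
    have key : ∀ (s1 s2 : S) (i1 i2 : Fin τ), s1 = s2 → (i1 : ℕ) = (i2 : ℕ) →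
        (e.symm s1).val i1 = (e.symm s2).val i2 := by
      rintro s1 s2 i1 i2 rfl h
      rw [Fin.ext h]
    exact congrArg G (key _ _ _ _
      (congrArg ζ (Fin.ext (by simp only [Fin.val_last]
                               have := Nat.div_add_mod t τ; omega)))
      (Nat.mod_eq_of_lt (Nat.mod_lt t hτ)).symm)

lemma gam_eval (ξ : ℕ → X) (t : ℕ) :
    (mkCC 𝒮 h𝒮 hτ G e).γ t (fun i : Fin (t + 1) => ξ i) =
      e (trk 𝒮 h𝒮 hτ (t % τ) (fun i : Fin (t % τ + 1) => ξ (τ * (t / τ) + i))) := rfl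

lemma delta_gam (ξ : ℕ → X) (t : ℕ) :
    (mkCC 𝒮 h𝒮 hτ G e).δ t (Gam (mkCC 𝒮 h𝒮 hτ G e) t (fun i : Fin (t + 1) => ξ i)) =
      G ((trk 𝒮 h𝒮 hτ (t % τ) (fun i : Fin (t % τ + 1) => ξ (τ * (t / τ) + i))).val
        ⟨t % τ, Nat.mod_lt t hτ⟩) := by
  show G ((e.symm (e _)).val _) = _
  rw [Equiv.symm_apply_apply]
  rfl

/-- Normalised form of the tracked sequence at time `τ*m + r`. -/
lemma trk_norm (ξ : ℕ → X) (m r : ℕ) (hr : r < τ) :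
    trk 𝒮 h𝒮 hτ ((τ * m + r) % τ)
        (fun i : Fin ((τ * m + r) % τ + 1) => ξ (τ * ((τ * m + r) / τ) + i)) =
      trk 𝒮 h𝒮 hτ r (fun i : Fin (r + 1) => ξ (τ * m + i)) := by
  have h1 : (τ * m + r) % τ = r := by rw [Nat.mul_add_mod]; exact Nat.mod_eq_of_lt hr
  have h2 : (τ * m + r) / τ = m := by
    rw [Nat.mul_add_div hτ, Nat.div_eq_of_lt hr]
    omega
  refine trk_congr 𝒮 h𝒮 hτ h1 _ _ ?_
  intro i
  congr 1
  rw [h2]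

end CC

end Stmt13

namespace Stmt13

variable {X U : Type*} {τ : ℕ}

section Adm

variable {S : Type} (F : X → U → Set X) (Q : Set X) (c : InvCover F Q)
  (𝒮 : Set (Fin τ → Set X))

lemma period (hspan : IsSpanning F Q c τ 𝒮) (h𝒮 : 𝒮.Nonempty) (hτ : 0 < τ)
    (ξ : ℕ → X) (ν : ℕ → U) (htraj : IsTraj F ξ ν) (m : ℕ)
    (hν : ∀ r (hr : r < τ), ν (τ * m + r) =
      c.G ((trk 𝒮 h𝒮 hτ r (fun i : Fin (r + 1) => ξ (τ * m + i))).val ⟨r, hr⟩))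
    (hQ0 : ξ (τ * m) ∈ Q) :
    (∀ r (hr : r < τ), ξ (τ * m + r) ∈
      (trk 𝒮 h𝒮 hτ r (fun i : Fin (r + 1) => ξ (τ * m + i))).val ⟨r, hr⟩) ∧
      ξ (τ * m + τ) ∈ Q := by
  have main : ∀ r (hr : r < τ), ξ (τ * m + r) ∈
      (trk 𝒮 h𝒮 hτ r (fun i : Fin (r + 1) => ξ (τ * m + i))).val ⟨r, hr⟩ := by
    intro r
    induction r with
    | zero =>
      intro hr
      show ξ (τ * m + 0) ∈ (init0 𝒮 h𝒮 hτ _).val ⟨0, hr⟩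
      obtain ⟨α, hα, h0, hx⟩ := hspan.2.1 _ hQ0
      have hex : ∃ A ∈ PLast 𝒮, ξ (τ * m) ∈ A := ⟨α ⟨0, h0⟩, ⟨α, hα, h0, rfl⟩, hx⟩
      exact mem_init0 𝒮 h𝒮 hτ hex
    | succ r ih =>
      intro hr
      have hr' : r < τ := lt_trans (Nat.lt_succ_self r) hr
      have hmem := ih hr'
      have hstep := htraj (τ * m + r)
      rw [hν r hr'] at hstep
      have hsub := hspan.2.2 _ (trk 𝒮 h𝒮 hτ r (fun i : Fin (r + 1) => ξ (τ * m + i))).2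
        ⟨r, hr'⟩ (by simpa using hr) _ hmem
      have hx : ξ (τ * m + r + 1) ∈
          ⋃ A ∈ Pset 𝒮 (trk 𝒮 h𝒮 hτ r (fun i : Fin (r + 1) => ξ (τ * m + i))).val r, A :=
        hsub hstep
      rw [Set.mem_iUnion₂] at hx
      obtain ⟨A, hA, hxA⟩ := hx
      set β := trk 𝒮 h𝒮 hτ r (fun i : Fin (r + 1) => ξ (τ * m + i)) with hβ
      have hAC : Achoose 𝒮 β.val r (ξ (τ * m + r + 1)) ∈ Pset 𝒮 β.val r :=
        Achoose_mem 𝒮 r _ ⟨A, hA⟩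
      have hspec := nxtA_spec 𝒮 h𝒮 β r hr hAC
      have hW : (fun i : Fin (r + 1) =>
          (fun j : Fin (r + 2) => ξ (τ * m + j)) i.castSucc) =
          (fun i : Fin (r + 1) => ξ (τ * m + i)) := by
        funext i; simp
      show ξ (τ * m + (r + 1)) ∈
        (nxt 𝒮 h𝒮 (trk 𝒮 h𝒮 hτ r (fun i : Fin (r + 1) =>
            (fun j : Fin (r + 2) => ξ (τ * m + j)) i.castSucc)) r
          ((fun j : Fin (r + 2) => ξ (τ * m + j)) (Fin.last (r + 1)))).val ⟨r + 1, hr⟩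
      rw [hW]
      show ξ (τ * m + r + 1) ∈ (nxtA 𝒮 h𝒮 β r
        (Achoose 𝒮 β.val r (ξ (τ * m + r + 1)))).val ⟨r + 1, hr⟩
      rw [hspec.2]
      exact mem_Achoose 𝒮 ⟨A, hA, hxA⟩
  refine ⟨main, ?_⟩
  have h1 : τ - 1 < τ := by omega
  have hmem := main (τ - 1) h1
  have hcovm : (trk 𝒮 h𝒮 hτ (τ - 1) (fun i : Fin (τ - 1 + 1) => ξ (τ * m + i))).val
      ⟨τ - 1, h1⟩ ∈ c.cov :=
    hspan.1 _ (trk 𝒮 h𝒮 hτ (τ - 1) _).2 _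
  have hstep := htraj (τ * m + (τ - 1))
  rw [hν (τ - 1) h1] at hstep
  have hQ1 : ξ (τ * m + (τ - 1) + 1) ∈ Q := c.inv _ hcovm _ hmem hstep
  have he : τ * m + τ = τ * m + (τ - 1) + 1 := by omega
  rw [he]
  exact hQ1

lemma mkCC_adm (hspan : IsSpanning F Q c τ 𝒮) (h𝒮 : 𝒮.Nonempty) (hτ : 0 < τ)
    (e : {β : Fin τ → Set X // β ∈ 𝒮} ≃ S) :
    QAdmissible F Q (mkCC 𝒮 h𝒮 hτ c.G e) := by
  intro ξ ν htraj h0 hν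
  have hν2 : ∀ m r (hr : r < τ), ν (τ * m + r) =
      c.G ((trk 𝒮 h𝒮 hτ r (fun i : Fin (r + 1) => ξ (τ * m + i))).val ⟨r, hr⟩) := by
    intro m r hr
    rw [hν (τ * m + r), delta_gam 𝒮 h𝒮 hτ c.G e ξ (τ * m + r)]
    have h1 : (τ * m + r) % τ = r := by rw [Nat.mul_add_mod]; exact Nat.mod_eq_of_lt hr
    have hfin : (⟨(τ * m + r) % τ, Nat.mod_lt _ hτ⟩ : Fin τ) = ⟨r, hr⟩ := Fin.ext h1
    rw [trk_norm 𝒮 h𝒮 hτ ξ m r hr, hfin]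
  have hstart : ∀ m, ξ (τ * m) ∈ Q := by
    intro m
    induction m with
    | zero => simpa using h0
    | succ m ih =>
      have hp := (period F Q c 𝒮 hspan h𝒮 hτ ξ ν htraj m (hν2 m) ih).2
      have he : τ * (m + 1) = τ * m + τ := by ring
      rw [he]
      exact hp
  intro t
  have hd : τ * (t / τ) + t % τ = t := Nat.div_add_mod t τ
  have hmem := (period F Q c 𝒮 hspan h𝒮 hτ ξ ν htraj (t / τ) (hν2 (t / τ))
    (hstart (t / τ))).1 (t % τ) (Nat.mod_lt t hτ)
  have hsubQ := c.subset _ (hspan.1 _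
    (trk 𝒮 h𝒮 hτ (t % τ) (fun i : Fin (t % τ + 1) => ξ (τ * (t / τ) + i))).2
    ⟨t % τ, Nat.mod_lt t hτ⟩)
  have hQm := hsubQ hmem
  rwa [hd] at hQm

end Adm

end Stmt13

namespace Stmt13

open Real

variable {X U : Type*} {τ : ℕ}

section Rate

variable {S : Type} (F : X → U → Set X) (𝒮 : Set (Fin τ → Set X))

lemma S_finite {cov : Set (Set X)} (hcov : ∀ α ∈ 𝒮, ∀ t, α t ∈ cov)
    (hfc : cov.Finite) : 𝒮.Finite := by
  have h : 𝒮 ⊆ Set.pi Set.univ (fun _ : Fin τ => cov) := by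
    intro α hα i _
    exact hcov α hα i
  exact (Set.Finite.pi fun _ => hfc).subset h

lemma PLast_subset {cov : Set (Set X)} (hcov : ∀ α ∈ 𝒮, ∀ t, α t ∈ cov) :
    PLast 𝒮 ⊆ cov := by
  rintro A ⟨β, hβ, h0, rfl⟩
  exact hcov β hβ _

lemma prod_le_expNum (hfin : 𝒮.Finite) {α : Fin τ → Set X} (hα : α ∈ 𝒮) :
    ∏ t ∈ Finset.range τ, (Pset 𝒮 α t).ncard ≤ expNum 𝒮 := by
  have hset : {n | ∃ α ∈ 𝒮, n = ∏ t ∈ Finset.range τ, (Pset 𝒮 α t).ncard} =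
      (fun α => ∏ t ∈ Finset.range τ, (Pset 𝒮 α t).ncard) '' 𝒮 := by
    ext n; simp [eq_comm]
  have hbdd : BddAbove {n | ∃ α ∈ 𝒮, n = ∏ t ∈ Finset.range τ, (Pset 𝒮 α t).ncard} := by
    rw [hset]
    exact (hfin.image _).bddAbove
  exact le_csSup hbdd ⟨α, hα, rfl⟩

lemma one_le_Pset_ncard {cov : Set (Set X)} (hcov : ∀ α ∈ 𝒮, ∀ t, α t ∈ cov)
    (hfc : cov.Finite) (hτ : 0 < τ) {α : Fin τ → Set X} (hα : α ∈ 𝒮) (r : ℕ) :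
    1 ≤ (Pset 𝒮 α r).ncard := by
  have hfin : (Pset 𝒮 α r).Finite := hfc.subset (Pset_subset 𝒮 hcov α r)
  have hne := Pset_nonempty 𝒮 hα hτ r
  have := Set.ncard_pos hfin |>.2 hne
  omega

lemma one_le_expNum {cov : Set (Set X)} (hcov : ∀ α ∈ 𝒮, ∀ t, α t ∈ cov)
    (hfc : cov.Finite) (hτ : 0 < τ) (h𝒮 : 𝒮.Nonempty) : 1 ≤ expNum 𝒮 := by
  obtain ⟨α, hα⟩ := h𝒮
  calc 1 ≤ ∏ t ∈ Finset.range τ, (Pset 𝒮 α t).ncard :=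
        Finset.one_le_prod' fun t _ => one_le_Pset_ncard 𝒮 hcov hfc hτ hα t
    _ ≤ expNum 𝒮 := prod_le_expNum 𝒮 (S_finite 𝒮 hcov hfc) hα

lemma logb2_nat_nonneg (n : ℕ) : 0 ≤ Real.logb 2 n := by
  rcases Nat.eq_zero_or_pos n with rfl | h
  · simp
  · exact Real.logb_nonneg one_lt_two (by exact_mod_cast h)

lemma logb2_nat_mono {m n : ℕ} (h : m ≤ n) : Real.logb 2 m ≤ Real.logb 2 n := by
  rcases Nat.eq_zero_or_pos m with rfl | hm
  · simpa using logb2_nat_nonneg n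
  · exact Real.logb_le_logb_of_le one_lt_two (by exact_mod_cast hm) (by exact_mod_cast h)

variable (h𝒮 : 𝒮.Nonempty) (hτ : 0 < τ) (G : Set X → U)
  (e : {β : Fin τ → Set X // β ∈ 𝒮} ≃ S)

lemma zset_struct0 {t : ℕ} (htpos : 0 < t) (ht0 : t % τ = 0) (ζ : Fin t → S) :
    Zset F (mkCC 𝒮 h𝒮 hτ G e) ζ ⊆ (fun A => e (seq0 𝒮 h𝒮 hτ A)) '' PLast 𝒮 := by
  intro s hs
  rw [Zset, if_neg (by omega : ¬ t = 0)] at hs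
  obtain ⟨ξ, ν, htraj, hmatch, hs, hν⟩ := hs
  have e1 : trk 𝒮 h𝒮 hτ (t % τ) (fun i : Fin (t % τ + 1) => ξ (τ * (t / τ) + i)) =
      trk 𝒮 h𝒮 hτ 0 (fun i : Fin 1 => ξ (τ * (t / τ) + i)) :=
    trk_congr 𝒮 h𝒮 hτ ht0 _ _ (fun i => rfl)
  refine ⟨A0 𝒮 h𝒮 hτ (ξ (τ * (t / τ))), A0_mem 𝒮 h𝒮 hτ _, ?_⟩
  rw [← hs, gam_eval 𝒮 h𝒮 hτ G e ξ t, e1]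
  rfl

lemma zset_struct {t : ℕ} (htpos : 0 < t) (ht0 : 0 < t % τ) (ζ : Fin t → S) :
    ∀ s ∈ Zset F (mkCC 𝒮 h𝒮 hτ G e) ζ,
      ∃ A ∈ Pset 𝒮 (e.symm (ζ ⟨t - 1, by omega⟩)).val (t % τ - 1),
        s = e (nxtA 𝒮 h𝒮 (e.symm (ζ ⟨t - 1, by omega⟩)) (t % τ - 1) A) := by
  intro s hs
  rw [Zset, if_neg (by omega : ¬ t = 0)] at hs
  obtain ⟨ξ, ν, htraj, hmatch, hs, hν⟩ := hs
  have hmlt : t % τ < τ := Nat.mod_lt t hτ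
  have hd : τ * (t / τ) + t % τ = t := Nat.div_add_mod t τ
  obtain ⟨r', hrr⟩ : ∃ r', t % τ = r' + 1 := ⟨t % τ - 1, by omega⟩
  have hr'' : t % τ - 1 = r' := by omega
  rw [hr'']
  have hr'lt : r' < τ := by omega
  have e1 : trk 𝒮 h𝒮 hτ (t % τ) (fun i : Fin (t % τ + 1) => ξ (τ * (t / τ) + i)) =
      trk 𝒮 h𝒮 hτ (r' + 1) (fun i : Fin (r' + 2) => ξ (τ * (t / τ) + i)) :=
    trk_congr 𝒮 h𝒮 hτ hrr _ _ (fun i => rfl)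
  have e2 : (fun i : Fin (r' + 1) =>
      (fun j : Fin (r' + 2) => ξ (τ * (t / τ) + j)) i.castSucc) =
      (fun i : Fin (r' + 1) => ξ (τ * (t / τ) + i)) := by
    funext i; simp
  -- identify the previous symbol
  have h3 : t - 1 = τ * (t / τ) + r' := by omega
  have hm1 : (t - 1) % τ = r' := by
    rw [h3, Nat.mul_add_mod]
    exact Nat.mod_eq_of_lt hr'lt
  have hm2 : (t - 1) / τ = t / τ := by
    rw [h3, Nat.mul_add_div hτ, Nat.div_eq_of_lt hr'lt]
    omega
  have hmk := (gam_eval 𝒮 h𝒮 hτ G e ξ (t - 1)).symm.trans (hmatch ⟨t - 1, by omega⟩)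
  have e3 : trk 𝒮 h𝒮 hτ ((t - 1) % τ)
      (fun i : Fin ((t - 1) % τ + 1) => ξ (τ * ((t - 1) / τ) + i)) =
      trk 𝒮 h𝒮 hτ r' (fun i : Fin (r' + 1) => ξ (τ * (t / τ) + i)) := by
    refine trk_congr 𝒮 h𝒮 hτ hm1 _ _ ?_
    intro i
    congr 1
    rw [hm2]
  have hβζ : e.symm (ζ ⟨t - 1, by omega⟩) =
      trk 𝒮 h𝒮 hτ r' (fun i : Fin (r' + 1) => ξ (τ * (t / τ) + i)) := by
    rw [← hmk, e3, Equiv.symm_apply_apply]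
  refine ⟨Achoose 𝒮 (trk 𝒮 h𝒮 hτ r' (fun i : Fin (r' + 1) => ξ (τ * (t / τ) + i))).val r'
      (ξ (τ * (t / τ) + (r' + 1))), ?_, ?_⟩
  · rw [hβζ]
    exact Achoose_mem 𝒮 r' _
      (Pset_nonempty 𝒮 (trk 𝒮 h𝒮 hτ r' (fun i : Fin (r' + 1) => ξ (τ * (t / τ) + i))).2 hτ r')
  · rw [hβζ, ← hs, gam_eval 𝒮 h𝒮 hτ G e ξ t, e1, trk_succ, e2]
    rfl

end Rate

end Stmt13

namespace Stmt13

open Real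

variable {X U : Type*} {τ : ℕ}

section Rate2

variable {S : Type} (F : X → U → Set X) (𝒮 : Set (Fin τ → Set X))
  (h𝒮 : 𝒮.Nonempty) (hτ : 0 < τ) (G : Set X → U)
  (e : {β : Fin τ → Set X // β ∈ 𝒮} ≃ S)

lemma zset_ncard0 {cov : Set (Set X)} (hcov : ∀ α ∈ 𝒮, ∀ t, α t ∈ cov)
    (hfc : cov.Finite) {t : ℕ} (htpos : 0 < t) (ht0 : t % τ = 0) (ζ : Fin t → S) :
    (Zset F (mkCC 𝒮 h𝒮 hτ G e) ζ).ncard ≤ (PLast 𝒮).ncard := by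
  have hPfin : (PLast 𝒮).Finite := hfc.subset (PLast_subset 𝒮 hcov)
  calc (Zset F (mkCC 𝒮 h𝒮 hτ G e) ζ).ncard
      ≤ ((fun A => e (seq0 𝒮 h𝒮 hτ A)) '' PLast 𝒮).ncard :=
        Set.ncard_le_ncard (zset_struct0 F 𝒮 h𝒮 hτ G e htpos ht0 ζ) (hPfin.image _)
    _ ≤ (PLast 𝒮).ncard := Set.ncard_image_le hPfin

lemma zset_ncard {cov : Set (Set X)} (hcov : ∀ α ∈ 𝒮, ∀ t, α t ∈ cov)
    (hfc : cov.Finite) {t : ℕ} (htpos : 0 < t) (ht0 : 0 < t % τ) (ζ : Fin t → S) :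
    (Zset F (mkCC 𝒮 h𝒮 hτ G e) ζ).ncard ≤
      (Pset 𝒮 (e.symm (ζ ⟨t - 1, by omega⟩)).val (t % τ - 1)).ncard := by
  have hPfin : (Pset 𝒮 (e.symm (ζ ⟨t - 1, by omega⟩)).val (t % τ - 1)).Finite :=
    hfc.subset (Pset_subset 𝒮 hcov _ _)
  calc (Zset F (mkCC 𝒮 h𝒮 hτ G e) ζ).ncard
      ≤ ((fun A => e (nxtA 𝒮 h𝒮 (e.symm (ζ ⟨t - 1, by omega⟩)) (t % τ - 1) A)) ''
          Pset 𝒮 (e.symm (ζ ⟨t - 1, by omega⟩)).val (t % τ - 1)).ncard := by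
        refine Set.ncard_le_ncard ?_ (hPfin.image _)
        intro s hs
        obtain ⟨A, hA, hsA⟩ := zset_struct F 𝒮 h𝒮 hτ G e htpos ht0 ζ s hs
        exact ⟨A, hA, hsA.symm⟩
    _ ≤ _ := Set.ncard_image_le hPfin

lemma chain_step {τ' : ℕ} (ζ : Fin τ' → S)
    (hζ : ζ ∈ ZTau F (mkCC 𝒮 h𝒮 hτ G e) τ')
    {k : ℕ} (hk : k < τ') (hkr : 0 < k % τ) :
    ∀ t'' : Fin τ, (t'' : ℕ) ≤ k % τ - 1 →
      (e.symm (ζ ⟨k, hk⟩)).val t'' = (e.symm (ζ ⟨k - 1, by omega⟩)).val t'' := by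
  have hk0 : 0 < k := by
    rcases Nat.eq_zero_or_pos k with rfl | h
    · simp at hkr
    · exact h
  have hz := hζ.2 ⟨k, hk⟩ hk0
  obtain ⟨A, hA, hs⟩ := zset_struct F 𝒮 h𝒮 hτ G e hk0 hkr _ _ hz
  intro t'' ht''
  rw [hs, Equiv.symm_apply_apply]
  have hmlt := Nat.mod_lt k hτ
  exact (nxtA_spec 𝒮 h𝒮 _ _ (by omega : k % τ - 1 + 1 < τ) hA).1 t'' ht''

end Rate2

end Stmt13

namespace Stmt13

open Real Filter

variable {X U : Type*} {τ : ℕ}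

section Rate3

variable {S : Type} (F : X → U → Set X) (𝒮 : Set (Fin τ → Set X))
  (h𝒮 : 𝒮.Nonempty) (hτ : 0 < τ) (G : Set X → U)
  (e : {β : Fin τ → Set X // β ∈ 𝒮} ≃ S)

/-- The summand in `rateAt` as a function of `k : ℕ`. -/
noncomputable def term (τ' : ℕ) (ζ : Fin τ' → S) (k : ℕ) : ℝ :=
  if hk : k ≤ τ' then
    Real.logb 2 ((Zset F (mkCC 𝒮 h𝒮 hτ G e) (fun i : Fin k => ζ ⟨i, by omega⟩)).ncard)
  else 0

lemma term_nonneg (τ' : ℕ) (ζ : Fin τ' → S) (k : ℕ) : 0 ≤ term F 𝒮 h𝒮 hτ G e τ' ζ k := by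
  rw [term]
  split_ifs
  · exact logb2_nat_nonneg _
  · exact le_refl 0

lemma term_zero (τ' : ℕ) (ζ : Fin τ' → S) :
    term F 𝒮 h𝒮 hτ G e τ' ζ 0 = Real.logb 2 (Nat.card S) := by
  rw [term, dif_pos (Nat.zero_le τ')]
  congr 1
  rw [Zset, if_pos rfl, Set.ncard_univ]

end Rate3

section Rate4

variable {S : Type} (F : X → U → Set X) (𝒮 : Set (Fin τ → Set X))

/-- A sum of `logb`'s of `Pset`-cardinalities over part of a period is at most
`logb 2 (expNum 𝒮)`. -/
lemma gsum (hτ : 0 < τ) {cov : Set (Set X)} (hcov : ∀ α ∈ 𝒮, ∀ t, α t ∈ cov)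
    (hfc : cov.Finite) {αv : Fin τ → Set X} (hα : αv ∈ 𝒮) (L : ℕ) (hL : L ≤ τ - 1) :
    ∑ i ∈ Finset.range L, Real.logb 2 ((Pset 𝒮 αv i).ncard) +
      Real.logb 2 ((Pset 𝒮 αv (τ - 1)).ncard) ≤ Real.logb 2 (expNum 𝒮) := by
  have h1 : ∀ i, 1 ≤ (Pset 𝒮 αv i).ncard := fun i => one_le_Pset_ncard 𝒮 hcov hfc hτ hα i
  have hnotmem : τ - 1 ∉ Finset.range L := by
    simp only [Finset.mem_range]
    omega
  have hsub : insert (τ - 1) (Finset.range L) ⊆ Finset.range τ := by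
    intro x hx
    simp only [Finset.mem_insert, Finset.mem_range] at hx ⊢
    omega
  calc ∑ i ∈ Finset.range L, Real.logb 2 ((Pset 𝒮 αv i).ncard) +
        Real.logb 2 ((Pset 𝒮 αv (τ - 1)).ncard)
      = ∑ i ∈ insert (τ - 1) (Finset.range L), Real.logb 2 ((Pset 𝒮 αv i).ncard) := by
        rw [Finset.sum_insert hnotmem]
        ring
    _ ≤ ∑ i ∈ Finset.range τ, Real.logb 2 ((Pset 𝒮 αv i).ncard) :=
        Finset.sum_le_sum_of_subset_of_nonneg hsub (fun i _ _ => logb2_nat_nonneg _)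
    _ = Real.logb 2 (∏ i ∈ Finset.range τ, ((Pset 𝒮 αv i).ncard : ℝ)) := by
        simp only [Real.logb]
        rw [← Finset.sum_div]
        congr 1
        rw [Real.log_prod]
        intro i _
        have := h1 i
        positivity
    _ = Real.logb 2 ((∏ i ∈ Finset.range τ, (Pset 𝒮 αv i).ncard : ℕ) : ℝ) := by
        rw [Nat.cast_prod]
    _ ≤ Real.logb 2 (expNum 𝒮) :=
        logb2_nat_mono (prod_le_expNum 𝒮 (S_finite 𝒮 hcov hfc) hα)

variable (h𝒮 : 𝒮.Nonempty) (hτ : 0 < τ) (G : Set X → U)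
  (e : {β : Fin τ → Set X // β ∈ 𝒮} ≃ S)

lemma chain_all {τ' : ℕ} (ζ : Fin τ' → S)
    (hζ : ζ ∈ ZTau F (mkCC 𝒮 h𝒮 hτ G e) τ') (p E m : ℕ) (hp : p = τ * m)
    (hEle : E ≤ τ') (hEp : E ≤ p + τ) (hpE : p < E) :
    ∀ d j (hje : j = E - 1 - d) (hpj : p ≤ j) (t'' : Fin τ)
      (ht'' : (t'' : ℕ) + p ≤ j),
      (e.symm (ζ ⟨E - 1, by omega⟩)).val t'' = (e.symm (ζ ⟨j, by omega⟩)).val t'' := by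
  intro d
  induction d with
  | zero =>
    intro j hje hpj t'' ht''
    subst hje
    rfl
  | succ d ih =>
    intro j hje hpj t'' ht''
    by_cases hcase : E - 1 - d = j
    · exact ih j hcase.symm hpj t'' ht''
    · have hj1 : j + 1 = E - 1 - d := by omega
      have hjE : j + 1 < τ' := by omega
      have hmod : (j + 1) % τ = j + 1 - p := by
        have h5 : j + 1 = τ * m + (j + 1 - p) := by omega
        conv_lhs => rw [h5]
        rw [Nat.mul_add_mod]
        exact Nat.mod_eq_of_lt (by omega)
      have hpj1 : p ≤ j + 1 := by omega
      have ht1 : (t'' : ℕ) + p ≤ j + 1 := by omega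
      have h1 := ih (j + 1) hj1 hpj1 t'' ht1
      rw [h1]
      have hmodpos : 0 < (j + 1) % τ := by rw [hmod]; omega
      have ht2 : (t'' : ℕ) ≤ (j + 1) % τ - 1 := by rw [hmod]; omega
      exact chain_step F 𝒮 h𝒮 hτ G e ζ hζ hjE hmodpos t'' ht2

lemma block_bound {cov : Set (Set X)} (hcov : ∀ α ∈ 𝒮, ∀ t, α t ∈ cov)
    (hfc : cov.Finite) {τ' : ℕ} (ζ : Fin τ' → S)
    (hζ : ζ ∈ ZTau F (mkCC 𝒮 h𝒮 hτ G e) τ') (m : ℕ) (hm : τ * m < τ') :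
    ∑ k ∈ Finset.Ico (τ * m) (min (τ * (m + 1)) τ'), term F 𝒮 h𝒮 hτ G e τ' ζ k ≤
      (if m = 0 then Real.logb 2 (Nat.card S) else 0) + Real.logb 2 (expNum 𝒮) := by
  have hE1 : τ * (m + 1) = τ * m + τ := by ring
  obtain ⟨p, hp⟩ : ∃ p, p = τ * m := ⟨_, rfl⟩
  obtain ⟨E, hEdef⟩ : ∃ E, E = min (τ * (m + 1)) τ' := ⟨_, rfl⟩
  rw [← hEdef, ← hp]
  have hEle : E ≤ τ' := by rw [hEdef]; exact min_le_right _ _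
  have hEl : E ≤ τ * (m + 1) := by rw [hEdef]; exact min_le_left _ _
  have hEp : E ≤ p + τ := by omega
  have hm' : p < τ' := by omega
  have hpE : p < E := by
    rw [hEdef, hp]
    exact lt_min (by omega) hm
  have hm0p : m ≠ 0 → 0 < p := by
    intro hm0
    rw [hp]
    exact Nat.mul_pos hτ (Nat.pos_of_ne_zero hm0)
  have hp0m : p = 0 → m = 0 := by
    intro h
    by_contra hm0
    have := hm0p hm0
    omega
  -- the reference sequence of the block
  set α := e.symm (ζ ⟨E - 1, by omega⟩) with hαdef
  -- chain of prefix agreements within the block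
  have chain := chain_all F 𝒮 h𝒮 hτ G e ζ hζ p E m hp hEle hEp hpE
  -- bound for the individual terms
  have hterm : ∀ k ∈ Finset.Ico p E, term F 𝒮 h𝒮 hτ G e τ' ζ k ≤
      (if k = 0 then Real.logb 2 (Nat.card S)
        else Real.logb 2 ((Pset 𝒮 α.val (if k = p then τ - 1 else k - p - 1)).ncard)) := by
    intro k hk
    rw [Finset.mem_Ico] at hk
    by_cases hk0 : k = 0
    · subst hk0
      rw [if_pos rfl, term_zero]
    · rw [if_neg hk0]
      by_cases hkp : k = p
      · -- start of a period
        rw [if_pos hkp]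
        have hmod : k % τ = 0 := by rw [hkp, hp, Nat.mul_mod_right]
        have hb := zset_ncard0 F 𝒮 h𝒮 hτ G e hcov hfc (by omega : 0 < k) hmod
          (fun i : Fin k => ζ ⟨i, by omega⟩)
        rw [term, dif_pos (by omega : k ≤ τ')]
        refine le_trans (logb2_nat_mono hb) ?_
        rw [Pset_eq_PLast 𝒮 α.val (τ - 1) (by omega)]
      · -- inside a period
        rw [if_neg hkp]
        have hkgt : p < k := by omega
        have hmod : k % τ = k - p := by
          have h5 : k = τ * m + (k - p) := by omega
          conv_lhs => rw [h5]
          rw [Nat.mul_add_mod]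
          exact Nat.mod_eq_of_lt (by omega)
        have hmodpos : 0 < k % τ := by omega
        have hb := zset_ncard F 𝒮 h𝒮 hτ G e hcov hfc (by omega : 0 < k) hmodpos
          (fun i : Fin k => ζ ⟨i, by omega⟩)
        rw [term, dif_pos (by omega : k ≤ τ')]
        refine le_trans (logb2_nat_mono hb) ?_
        apply logb2_nat_mono
        apply le_of_eq
        congr 1
        have hc1 : k - 1 = E - 1 - (E - 1 - (k - 1)) := by omega
        have hc2 : p ≤ k - 1 := by omega
        have hagree := chain (E - 1 - (k - 1)) (k - 1) hc1 hc2
        have hPeq := Pset_congr 𝒮 (k % τ - 1) (by omega)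
          (fun t'' ht'' => ((hagree t'' (by omega)).symm :
            (e.symm (ζ ⟨k - 1, by omega⟩)).val t'' = α.val t''))
        rw [show k - p - 1 = k % τ - 1 by omega]
        exact hPeq
  calc ∑ k ∈ Finset.Ico p E, term F 𝒮 h𝒮 hτ G e τ' ζ k
      ≤ ∑ k ∈ Finset.Ico p E, (if k = 0 then Real.logb 2 (Nat.card S)
          else Real.logb 2 ((Pset 𝒮 α.val (if k = p then τ - 1 else k - p - 1)).ncard)) :=
        Finset.sum_le_sum hterm
    _ = (if p = 0 then Real.logb 2 (Nat.card S)
          else Real.logb 2 ((Pset 𝒮 α.val (τ - 1)).ncard)) +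
        ∑ k ∈ Finset.Ico (p + 1) E, Real.logb 2 ((Pset 𝒮 α.val (k - p - 1)).ncard) := by
        rw [Finset.sum_eq_sum_Ico_succ_bot hpE]
        congr 1
        · by_cases hp0 : p = 0 <;> simp [hp0]
        · apply Finset.sum_congr rfl
          intro k hk
          rw [Finset.mem_Ico] at hk
          rw [if_neg (by omega), if_neg (by omega)]
    _ = (if p = 0 then Real.logb 2 (Nat.card S)
          else Real.logb 2 ((Pset 𝒮 α.val (τ - 1)).ncard)) +
        ∑ i ∈ Finset.range (E - (p + 1)), Real.logb 2 ((Pset 𝒮 α.val i).ncard) := by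
        congr 1
        rw [Finset.sum_Ico_eq_sum_range]
        apply Finset.sum_congr rfl
        intro i _
        have hi : p + 1 + i - p - 1 = i := by omega
        rw [hi]
    _ ≤ (if m = 0 then Real.logb 2 (Nat.card S) else 0) + Real.logb 2 (expNum 𝒮) := by
        by_cases hm0 : m = 0
        · have hp0 : p = 0 := by
            rw [hp, hm0, Nat.mul_zero]
          rw [if_pos hp0, if_pos hm0, add_comm (Real.logb 2 (Nat.card S)),
            add_comm (Real.logb 2 (Nat.card S))]
          apply add_le_add_left
          calc ∑ i ∈ Finset.range (E - (p + 1)), Real.logb 2 ((Pset 𝒮 α.val i).ncard)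
              ≤ ∑ i ∈ Finset.range (E - (p + 1)), Real.logb 2 ((Pset 𝒮 α.val i).ncard) +
                Real.logb 2 ((Pset 𝒮 α.val (τ - 1)).ncard) := by
                have := logb2_nat_nonneg ((Pset 𝒮 α.val (τ - 1)).ncard)
                linarith
            _ ≤ Real.logb 2 (expNum 𝒮) := gsum 𝒮 hτ hcov hfc α.2 _ (by omega)
        · have hppos := hm0p hm0
          rw [if_neg (by omega : ¬ p = 0), if_neg hm0, zero_add, add_comm]
          exact gsum 𝒮 hτ hcov hfc α.2 _ (by omega)

end Rate4

end Stmt13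

namespace Stmt13

open Real Filter

variable {X U : Type*} {τ : ℕ}

section Rate5

variable {S : Type} (F : X → U → Set X) (𝒮 : Set (Fin τ → Set X))
  (h𝒮 : 𝒮.Nonempty) (hτ : 0 < τ) (G : Set X → U)
  (e : {β : Fin τ → Set X // β ∈ 𝒮} ≃ S)

lemma claimA {cov : Set (Set X)} (hcov : ∀ α ∈ 𝒮, ∀ t, α t ∈ cov)
    (hfc : cov.Finite) {τ' : ℕ} (ζ : Fin τ' → S)
    (hζ : ζ ∈ ZTau F (mkCC 𝒮 h𝒮 hτ G e) τ') (m : ℕ) :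
    ∑ k ∈ Finset.range (min (τ * m) τ'), term F 𝒮 h𝒮 hτ G e τ' ζ k ≤
      Real.logb 2 (Nat.card S) + m * Real.logb 2 (expNum 𝒮) := by
  induction m with
  | zero =>
    have h0 : min (τ * 0) τ' = 0 := by simp
    rw [h0]
    simp only [Finset.range_zero, Finset.sum_empty, Nat.cast_zero, zero_mul, add_zero]
    exact logb2_nat_nonneg _
  | succ m ih =>
    have hL0 : 0 ≤ Real.logb 2 (expNum 𝒮) := logb2_nat_nonneg _
    have hmono : τ * m ≤ τ * (m + 1) := Nat.mul_le_mul_left τ (by omega)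
    rcases lt_or_ge (τ * m) τ' with hm | hm
    · have h1 : τ * m ≤ min (τ * (m + 1)) τ' := le_min hmono (le_of_lt hm)
      have hsplit : ∑ k ∈ Finset.range (min (τ * (m + 1)) τ'), term F 𝒮 h𝒮 hτ G e τ' ζ k =
          ∑ k ∈ Finset.range (min (τ * m) τ'), term F 𝒮 h𝒮 hτ G e τ' ζ k +
            ∑ k ∈ Finset.Ico (τ * m) (min (τ * (m + 1)) τ'), term F 𝒮 h𝒮 hτ G e τ' ζ k := by
        rw [min_eq_left (le_of_lt hm), Finset.range_eq_Ico, Finset.range_eq_Ico]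
        exact (Finset.sum_Ico_consecutive (fun k => term F 𝒮 h𝒮 hτ G e τ' ζ k) (Nat.zero_le _) h1).symm
      rw [hsplit]
      have hblock := block_bound F 𝒮 h𝒮 hτ G e hcov hfc ζ hζ m hm
      by_cases hm0 : m = 0
      · subst hm0
        have h2 : min (τ * 0) τ' = 0 := by simp
        rw [h2]
        simp only [Finset.range_zero, Finset.sum_empty, zero_add]
        rw [if_pos rfl] at hblock
        calc ∑ k ∈ Finset.Ico (τ * 0) (min (τ * (0 + 1)) τ'), term F 𝒮 h𝒮 hτ G e τ' ζ k
            ≤ Real.logb 2 (Nat.card S) + Real.logb 2 (expNum 𝒮) := hblock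
          _ ≤ Real.logb 2 (Nat.card S) + (0 + 1 : ℕ) * Real.logb 2 (expNum 𝒮) := by
              push_cast
              linarith
      · rw [if_neg hm0, zero_add] at hblock
        calc ∑ k ∈ Finset.range (min (τ * m) τ'), term F 𝒮 h𝒮 hτ G e τ' ζ k +
              ∑ k ∈ Finset.Ico (τ * m) (min (τ * (m + 1)) τ'), term F 𝒮 h𝒮 hτ G e τ' ζ k
            ≤ (Real.logb 2 (Nat.card S) + m * Real.logb 2 (expNum 𝒮)) +
              Real.logb 2 (expNum 𝒮) := add_le_add ih hblock
          _ = Real.logb 2 (Nat.card S) + (m + 1 : ℕ) * Real.logb 2 (expNum 𝒮) := by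
              push_cast
              ring
    · have h2 : min (τ * (m + 1)) τ' = τ' := min_eq_right (le_trans hm hmono)
      have h3 : min (τ * m) τ' = τ' := min_eq_right hm
      rw [h2]
      have ih' : ∑ k ∈ Finset.range τ', term F 𝒮 h𝒮 hτ G e τ' ζ k ≤
          Real.logb 2 (Nat.card S) + m * Real.logb 2 (expNum 𝒮) := by
        rwa [h3] at ih
      refine le_trans ih' ?_
      push_cast
      linarith

lemma rateAt_nonneg {S' : Type} (H : CoderController X U S') (τ' : ℕ) :
    0 ≤ rateAt F H τ' := by
  apply Real.sSup_nonneg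
  rintro r ⟨ζ, hζ, rfl⟩
  exact mul_nonneg (by positivity) (Finset.sum_nonneg fun k _ => logb2_nat_nonneg _)

lemma rateAt_le {cov : Set (Set X)} (hcov : ∀ α ∈ 𝒮, ∀ t, α t ∈ cov)
    (hfc : cov.Finite) (τ' : ℕ) (hτ' : 0 < τ') :
    rateAt F (mkCC 𝒮 h𝒮 hτ G e) τ' ≤
      (τ : ℝ)⁻¹ * Real.logb 2 (expNum 𝒮) +
        (Real.logb 2 (Nat.card S) + Real.logb 2 (expNum 𝒮)) * (τ' : ℝ)⁻¹ := by
  have hL0 : 0 ≤ Real.logb 2 (expNum 𝒮) := logb2_nat_nonneg _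
  have hCS0 : 0 ≤ Real.logb 2 (Nat.card S) := logb2_nat_nonneg _
  have hτ0 : (0 : ℝ) < τ := by exact_mod_cast hτ
  have hτ'0 : (0 : ℝ) < τ' := by exact_mod_cast hτ'
  apply Real.sSup_le
  · rintro r ⟨ζ, hζ, rfl⟩
    have key : (τ' : ℝ)⁻¹ * (∑ k : Fin τ', Real.logb 2
        ((Zset F (mkCC 𝒮 h𝒮 hτ G e) (fun i : Fin (k : ℕ) => ζ ⟨i, by omega⟩)).ncard)) ≤
        (τ : ℝ)⁻¹ * Real.logb 2 (expNum 𝒮) +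
          (Real.logb 2 (Nat.card S) + Real.logb 2 (expNum 𝒮)) * (τ' : ℝ)⁻¹ := by
      have heq : ∀ k : Fin τ', Real.logb 2
          ((Zset F (mkCC 𝒮 h𝒮 hτ G e) (fun i : Fin (k : ℕ) => ζ ⟨i, by omega⟩)).ncard) =
          term F 𝒮 h𝒮 hτ G e τ' ζ (k : ℕ) := by
        intro k
        rw [term, dif_pos (le_of_lt k.isLt)]
      have hsum : (∑ k : Fin τ', Real.logb 2
          ((Zset F (mkCC 𝒮 h𝒮 hτ G e) (fun i : Fin (k : ℕ) => ζ ⟨i, by omega⟩)).ncard)) =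
          ∑ k ∈ Finset.range τ', term F 𝒮 h𝒮 hτ G e τ' ζ k := by
        rw [← Fin.sum_univ_eq_sum_range (fun k => term F 𝒮 h𝒮 hτ G e τ' ζ k) τ']
        exact Finset.sum_congr rfl fun k _ => heq k
      rw [hsum]
      have hmin : min (τ * (τ' / τ + 1)) τ' = τ' := by
        apply min_eq_right
        have h4 := Nat.div_add_mod τ' τ
        have h5 := Nat.mod_lt τ' hτ
        have h6 : τ * (τ' / τ + 1) = τ * (τ' / τ) + τ := by ring
        omega
      have hA := claimA F 𝒮 h𝒮 hτ G e hcov hfc ζ hζ (τ' / τ + 1)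
      rw [hmin] at hA
      have hstep1 : (τ' : ℝ)⁻¹ * (∑ k ∈ Finset.range τ', term F 𝒮 h𝒮 hτ G e τ' ζ k) ≤
          (τ' : ℝ)⁻¹ * (Real.logb 2 (Nat.card S) +
            ((τ' / τ : ℕ) + 1 : ℝ) * Real.logb 2 (expNum 𝒮)) := by
        apply mul_le_mul_of_nonneg_left _ (by positivity)
        exact hA.trans_eq (by push_cast; ring)
      refine le_trans hstep1 ?_
      have hd : ((τ' / τ : ℕ) : ℝ) ≤ (τ' : ℝ) / (τ : ℝ) := Nat.cast_div_le
      calc (τ' : ℝ)⁻¹ * (Real.logb 2 (Nat.card S) +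
              ((τ' / τ : ℕ) + 1 : ℝ) * Real.logb 2 (expNum 𝒮))
          ≤ (τ' : ℝ)⁻¹ * (Real.logb 2 (Nat.card S) +
              ((τ' : ℝ) / (τ : ℝ) + 1) * Real.logb 2 (expNum 𝒮)) := by
            apply mul_le_mul_of_nonneg_left _ (by positivity)
            apply add_le_add_right
            exact mul_le_mul_of_nonneg_right (add_le_add_left hd 1) hL0
        _ = (τ : ℝ)⁻¹ * Real.logb 2 (expNum 𝒮) +
              (Real.logb 2 (Nat.card S) + Real.logb 2 (expNum 𝒮)) * (τ' : ℝ)⁻¹ := by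
            field_simp
            ring
    exact key
  · have h1 : (0 : ℝ) ≤ (τ : ℝ)⁻¹ * Real.logb 2 (expNum 𝒮) := by positivity
    have h2 : (0 : ℝ) ≤ (Real.logb 2 (Nat.card S) + Real.logb 2 (expNum 𝒮)) *
        (τ' : ℝ)⁻¹ := by positivity
    linarith

lemma dataRate_le {cov : Set (Set X)} (hcov : ∀ α ∈ 𝒮, ∀ t, α t ∈ cov)
    (hfc : cov.Finite) :
    dataRate F (mkCC 𝒮 h𝒮 hτ G e) ≤ (τ : ℝ)⁻¹ * Real.logb 2 (expNum 𝒮) := by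
  set L := Real.logb 2 (expNum 𝒮) with hL
  set C := Real.logb 2 (Nat.card S) + L with hC
  have hB : Tendsto (fun τ' : ℕ => (τ : ℝ)⁻¹ * L + C * (τ' : ℝ)⁻¹) atTop
      (𝓝 ((τ : ℝ)⁻¹ * L + C * 0)) :=
    tendsto_const_nhds.add (Filter.Tendsto.const_mul C tendsto_inv_atTop_nhds_zero_nat)
  have hle : (fun τ' : ℕ => rateAt F (mkCC 𝒮 h𝒮 hτ G e) τ') ≤ᶠ[atTop]
      (fun τ' : ℕ => (τ : ℝ)⁻¹ * L + C * (τ' : ℝ)⁻¹) :=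
    Filter.eventually_atTop.2 ⟨1, fun τ' h1 =>
      rateAt_le F 𝒮 h𝒮 hτ G e hcov hfc τ' (by omega)⟩
  have hcb : Filter.IsCoboundedUnder (· ≤ ·) atTop
      (fun τ' : ℕ => rateAt F (mkCC 𝒮 h𝒮 hτ G e) τ') := by
    apply Filter.IsBoundedUnder.isCoboundedUnder_le
    exact Filter.isBoundedUnder_of ⟨0, fun τ' => rateAt_nonneg F _ τ'⟩
  calc dataRate F (mkCC 𝒮 h𝒮 hτ G e)
      ≤ Filter.limsup (fun τ' : ℕ => (τ : ℝ)⁻¹ * L + C * (τ' : ℝ)⁻¹) atTop :=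
        Filter.limsup_le_limsup hle hcb hB.isBoundedUnder_le
    _ = (τ : ℝ)⁻¹ * L + C * 0 := hB.limsup_eq
    _ = (τ : ℝ)⁻¹ * L := by ring

end Rate5

end Stmt13
/-- For every invariant cover `(𝒜,G)` of `Σ` and `Q` and every
`(τ,Q)`-spanning set `𝒮` in `(𝒜,G)` there exists a `Q`-admissible `τ`-periodic
coder-controller `H` with `R(H) ≤ (1/τ) log₂ N(𝒮)`. -/
theorem exists_coderController_of_spanning
    {X U : Type*} [Nonempty X] [Nonempty U]
    (F : X → U → Set X) (hF : ∀ x u, (F x u).Nonempty)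
    (Q : Set X) (hQ : Q.Nonempty)
    (c : InvCover F Q) (τ : ℕ) (hτ : 0 < τ)
    (𝒮 : Set (Fin τ → Set X)) (hspan : IsSpanning F Q c τ 𝒮) :
    ∃ (S : Type) (_ : Fintype S) (_ : Nonempty S) (H : CoderController X U S),
      QAdmissible F Q H ∧ IsPeriodic H τ ∧
      dataRate F H ≤ (τ : ℝ)⁻¹ * Real.logb 2 (expNum 𝒮) := by
  classical
  obtain ⟨x0, hx0⟩ := hQ
  obtain ⟨α0, hα0, h0, -⟩ := hspan.2.1 x0 hx0
  have h𝒮 : 𝒮.Nonempty := ⟨α0, hα0⟩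
  have hfin : 𝒮.Finite := Stmt13.S_finite 𝒮 hspan.1 c.finite
  haveI : Fintype {β : Fin τ → Set X // β ∈ 𝒮} := hfin.fintype
  refine ⟨Fin (Fintype.card {β : Fin τ → Set X // β ∈ 𝒮}), inferInstance,
    ⟨Fintype.equivFin _ (Stmt13.dflt 𝒮 h𝒮)⟩,
    Stmt13.mkCC 𝒮 h𝒮 hτ c.G (Fintype.equivFin _),
    Stmt13.mkCC_adm F Q c 𝒮 hspan h𝒮 hτ (Fintype.equivFin _),
    Stmt13.mkCC_periodic 𝒮 h𝒮 hτ c.G (Fintype.equivFin _),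
    Stmt13.dataRate_le F 𝒮 h𝒮 hτ c.G (Fintype.equivFin _) hspan.1 c.finite⟩
end

section
/- Let a∈ℝ with a≠0 and w₁,q₁,w₂,q₂∈ℝ with q₁ < w₁ ≤ w₂ < q₂. Let Σ=(X,U,F) with X=U=ℝ and F(x,u) = a·x + u + [w₁,w₂], and let Q := [q₁,q₂]. Put Δq := q₂−q₁, Δw := w₂−w₁, q_c := (q₁+q₂)/2 (the midpoint of Q), w_c := (w₁+w₂)/2 (the midpoint of [w₁,w₂]), m := ⌈ |a|·Δq/(Δq−Δw) ⌉ and d := Δq/m. For i∈ℤ define Λ_i := q_c + [i·d, (i+1)·d] if m is even and Λ_i := q_c + [(i−1/2)·d, (i+1/2)·d] if m is odd; define 𝒞 := { Λ_i ∩ Q : Λ_i ∩ int Q ≠ ∅ } and, for each cover element C_i = Λ_i ∩ Q ∈ 𝒞, H(C_i) := q_c − a·q_c − w_c − a·d·(i+1/2) if m is even and H(C_i) := q_c − a·q_c − w_c − a·d·i if m is odd. Then (𝒞,H) is an invariant cover of Σ and [q₁,q₂], and log₂ ⌈ |a|·Δq/(Δq−Δw) ⌉ = R(𝒞,H), i.e.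 #𝒞 = m. -/
open Set Filter Topology

variable {X U : Type*}

/-- For the scalar uncertain linear system
`ξ(t+1) ∈ a ξ(t) + ν(t) + [w₁,w₂]` and `Q = [q₁,q₂]` with `q₁ < w₁ ≤ w₂ < q₂`, the
explicit construction `(𝒞,H)` (cover elements `Λ_i ∩ Q` and inputs `H(C_i)`) is an
invariant cover of the system and `Q` with `#𝒞 = m = ⌈|a| Δq / (Δq − Δw)⌉`, i.e.
`log₂ ⌈|a| Δq / (Δq − Δw)⌉ = R(𝒞,H)`. -/
theorem scalar_static_coderController
    (a w₁ w₂ q₁ q₂ : ℝ) (ha : a ≠ 0) (h1 : q₁ < w₁) (h2 : w₁ ≤ w₂) (h3 : w₂ < q₂) :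
    let Q : Set ℝ := Set.Icc q₁ q₂
    let F : ℝ → ℝ → Set ℝ := fun x u => {y | ∃ w ∈ Set.Icc w₁ w₂, y = a * x + u + w}
    let Δq : ℝ := q₂ - q₁
    let Δw : ℝ := w₂ - w₁
    let qc : ℝ := (q₁ + q₂) / 2
    let wc : ℝ := (w₁ + w₂) / 2
    let m : ℕ := ⌈|a| * Δq / (Δq - Δw)⌉₊
    let d : ℝ := Δq / m
    let Λ : ℤ → Set ℝ := fun i =>
      if Even m then Set.Icc (qc + i * d) (qc + (i + 1) * d)
      else Set.Icc (qc + (i - 1 / 2) * d) (qc + (i + 1 / 2) * d)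
    let u : ℤ → ℝ := fun i =>
      qc - a * qc - wc - (if Even m then a * d * (i + 1 / 2) else a * d * i)
    ∃ c : InvCover F Q,
      c.cov = {C | ∃ i : ℤ, (Λ i ∩ interior Q).Nonempty ∧ C = Λ i ∩ Q} ∧
      (∀ i : ℤ, (Λ i ∩ interior Q).Nonempty → c.G (Λ i ∩ Q) = u i) ∧
      c.cov.ncard = m := by
  classical
  intro Q F Δq Δw qc wc m d Λ u
  have hΔq0 : 0 < Δq := by simp only [Δq]; linarith
  have hΔqw : 0 < Δq - Δw := by simp only [Δq, Δw]; linarith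
  have hm1 : 1 ≤ m := Nat.one_le_iff_ne_zero.mpr (by
    simp only [m, ne_eq, Nat.ceil_eq_zero, not_le]
    positivity)
  have hmR : (0:ℝ) < m := by exact_mod_cast Nat.lt_of_lt_of_le Nat.zero_lt_one hm1
  have hd0 : 0 < d := div_pos hΔq0 hmR
  have hmd : (m:ℝ) * d = Δq := by simp only [d]; field_simp [hmR.ne']
  -- the uniform description of Λ
  set s : ℝ := if Even m then 0 else 1/2 with hs
  set L : ℤ → ℝ := fun i => qc + ((i:ℝ) - s) * d with hLdef
  have hΛ : ∀ i : ℤ, Λ i = Set.Icc (L i) (L i + d) := by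
    intro i
    by_cases he : Even m <;>
      simp only [Λ, L, if_pos, if_neg, he, if_true, if_false, hs] <;>
      · congr 1 <;> ring
  have hu : ∀ i : ℤ, u i = qc - a*qc - wc - a*d*((i:ℝ) + 1/2 - s) := by
    intro i
    by_cases he : Even m <;> simp only [u, hs, he, if_true, if_false] <;> ring
  set lo : ℤ := if Even m then -((m:ℤ)/2) else (1 - (m:ℤ))/2 with hlo
  have hloR : (lo:ℝ) = s - (m:ℝ)/2 := by
    rcases Nat.even_or_odd m with he | ho
    · obtain ⟨k, hk⟩ := id he
      rw [hlo, hs, if_pos he, if_pos he]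
      have h5 : ((m:ℤ))/2 = k := by omega
      rw [h5]; push_cast [hk]; ring
    · have hne : ¬ Even m := Nat.not_even_iff_odd.mpr ho
      obtain ⟨k, hk⟩ := id ho
      rw [hlo, hs, if_neg hne, if_neg hne]
      have h5 : (1 - (m:ℤ))/2 = -k := by omega
      rw [h5]; push_cast [hk]; ring
  clear_value s L lo
  have hmd2 : (m:ℝ)/2 * d = Δq/2 := by rw [div_mul_eq_mul_div, hmd]
  have hq1 : q₁ = qc - (m:ℝ)/2 * d := by rw [hmd2]; simp only [qc, Δq]; ring
  have hq2 : q₂ = qc + (m:ℝ)/2 * d := by rw [hmd2]; simp only [qc, Δq]; ring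
  set S : Set ℤ := Set.Icc lo (lo + m - 1) with hS
  -- subset: Λ i ⊆ Q for i ∈ S
  have hsub : ∀ i ∈ S, Λ i ⊆ Q := by
    intro i hi
    obtain ⟨hi1, hi2⟩ := hi
    have hi1R : (lo:ℝ) ≤ i := by exact_mod_cast hi1
    have hi2R : (i:ℝ) ≤ (lo:ℝ) + m - 1 := by exact_mod_cast hi2
    rw [hΛ]
    have hL1 : q₁ ≤ L i := by
      rw [hq1, hLdef]
      have : (-( (m:ℝ)/2)) * d ≤ ((i:ℝ) - s) * d :=
        mul_le_mul_of_nonneg_right (by rw [hloR] at hi1R; linarith) hd0.le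
      linarith
    have hL2 : L i + d ≤ q₂ := by
      rw [hq2, hLdef]
      have : ((i:ℝ) - s + 1) * d ≤ ((m:ℝ)/2) * d :=
        mul_le_mul_of_nonneg_right (by rw [hloR] at hi2R; linarith) hd0.le
      linarith
    intro x hx
    exact ⟨le_trans hL1 hx.1, le_trans hx.2 hL2⟩
  have hintQ : interior Q = Set.Ioo q₁ q₂ := interior_Icc
  -- validity characterization
  have hvalid : ∀ i : ℤ, (Λ i ∩ interior Q).Nonempty ↔ i ∈ S := by
    intro i
    constructor
    · rintro ⟨x, hxΛ, hxI⟩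
      rw [hΛ] at hxΛ
      rw [hintQ] at hxI
      have hb1 : L i < q₂ := lt_of_le_of_lt hxΛ.1 hxI.2
      have hb2 : q₁ < L i + d := lt_of_lt_of_le hxI.1 hxΛ.2
      rw [hLdef, hq2] at hb1
      rw [hLdef, hq1] at hb2
      have hc1 : ((i:ℝ) - s) * d < ((m:ℝ)/2) * d := by linarith
      have hc2 : (-((m:ℝ)/2)) * d < ((i:ℝ) - s + 1) * d := by linarith
      have hd1 : (i:ℝ) - s < (m:ℝ)/2 := lt_of_mul_lt_mul_right (by linarith) hd0.le
      have hd2 : -((m:ℝ)/2) < (i:ℝ) - s + 1 := lt_of_mul_lt_mul_right (by linarith) hd0.le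
      have he1 : (i:ℝ) < ((lo + m : ℤ) : ℝ) := by push_cast; rw [hloR]; push_cast; linarith
      have he2 : ((lo - 1 : ℤ):ℝ) < (i:ℝ) := by push_cast; rw [hloR]; linarith
      have : i < lo + m := by exact_mod_cast he1
      have : lo - 1 < i := by exact_mod_cast he2
      constructor <;> omega
    · intro hi
      refine ⟨L i + d/2, ?_, ?_⟩
      · rw [hΛ]; constructor <;> linarith
      · rw [hintQ]
        have h4 := hsub i hi
        rw [hΛ] at h4
        have h5 : L i ∈ Q := h4 ⟨le_refl _, by linarith⟩
        have h6 : L i + d ∈ Q := h4 ⟨by linarith, le_refl _⟩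
        exact ⟨lt_of_le_of_lt h5.1 (by linarith), lt_of_lt_of_le (by linarith : L i + d/2 < L i + d) h6.2⟩
  -- injectivity
  have hinj : ∀ i j : ℤ, Λ i = Λ j → i = j := by
    intro i j hij
    rw [hΛ, hΛ] at hij
    have h4 : L i ∈ Set.Icc (L j) (L j + d) := by
      rw [← hij]; exact ⟨le_refl _, by linarith⟩
    have h5 : L j ∈ Set.Icc (L i) (L i + d) := by
      rw [hij]; exact ⟨le_refl _, by linarith⟩
    have h6 : L i = L j := le_antisymm h5.1 h4.1
    rw [hLdef] at h6
    simp only at h6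
    have h7 : ((i:ℝ) - s) * d = ((j:ℝ) - s) * d := by linarith
    have : (i:ℝ) = j := by
      have := mul_right_cancel₀ (ne_of_gt hd0) h7
      linarith
    exact_mod_cast this
  have hiq : ∀ i ∈ S, Λ i ∩ Q = Λ i := fun i hi => inter_eq_left.mpr (hsub i hi)
  set Gfun : Set ℝ → ℝ := fun C =>
    if h : ∃ i : ℤ, (Λ i ∩ interior Q).Nonempty ∧ C = Λ i ∩ Q then u h.choose else 0
    with hG
  have hGspec : ∀ i : ℤ, (Λ i ∩ interior Q).Nonempty → Gfun (Λ i ∩ Q) = u i := by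
    intro i hi
    have hex : ∃ j : ℤ, (Λ j ∩ interior Q).Nonempty ∧ Λ i ∩ Q = Λ j ∩ Q := ⟨i, hi, rfl⟩
    rw [hG]
    simp only
    rw [dif_pos hex]
    obtain ⟨hj1, hj2⟩ := hex.choose_spec
    have hiS : i ∈ S := (hvalid i).mp hi
    have hjS : hex.choose ∈ S := (hvalid _).mp hj1
    have h9 : Λ i = Λ hex.choose := (hiq i hiS).symm.trans (hj2.trans (hiq _ hjS))
    exact congrArg u (hinj _ _ h9.symm)
  have hcovS : {C | ∃ i : ℤ, (Λ i ∩ interior Q).Nonempty ∧ C = Λ i ∩ Q} = Λ '' S := by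
    ext C
    simp only [mem_setOf_eq, mem_image]
    constructor
    · rintro ⟨i, hi, rfl⟩
      have hiS := (hvalid i).mp hi
      exact ⟨i, hiS, (hiq i hiS).symm⟩
    · rintro ⟨i, hiS, rfl⟩
      exact ⟨i, (hvalid i).mpr hiS, (hiq i hiS).symm⟩
  have hkey : |a| * d ≤ Δq - Δw := by
    have hceil : |a| * Δq / (Δq - Δw) ≤ (m:ℝ) := Nat.le_ceil _
    have h4 : |a| * Δq ≤ (m:ℝ) * (Δq - Δw) := by
      rw [div_le_iff₀ hΔqw] at hceil; linarith
    have h5 : |a| * d = |a| * Δq / (m:ℝ) := by simp only [d]; ring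
    rw [h5, div_le_iff₀ hmR]; linarith
  have hq1' : q₁ = qc - Δq/2 := by simp only [qc, Δq]; ring
  have hq2' : q₂ = qc + Δq/2 := by simp only [qc, Δq]; ring
  have hwc' : wc = (w₁ + w₂)/2 := rfl
  have hΔw' : Δw = w₂ - w₁ := rfl
  have hinv : ∀ i ∈ S, ∀ x ∈ Λ i, ∀ y ∈ F x (u i), y ∈ Q := by
    intro i hiS x hx y hy
    obtain ⟨w, hw, hyeq⟩ := hy
    rw [hΛ] at hx
    set ci : ℝ := L i + d/2 with hci
    clear_value ci
    have hexp : a*x + u i + w - qc = a*(x - ci) + (w - wc) := by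
      rw [hu]; simp only [hci, hLdef]; ring
    have habs : |a * (x - ci)| ≤ |a| * (d/2) := by
      rw [abs_mul]
      refine mul_le_mul_of_nonneg_left ?_ (abs_nonneg a)
      rw [abs_le]
      obtain ⟨hxl, hxr⟩ := hx
      refine ⟨?_, ?_⟩
      · simp only [hci]; linarith [hxl]
      · simp only [hci]; linarith [hxr]
    obtain ⟨ha1, ha2⟩ := abs_le.mp habs
    rw [hyeq]
    constructor
    · linarith [hw.1, hw.2, hexp, ha1, ha2, hkey, hq1', hq2', hwc', hΔw']
    · linarith [hw.1, hw.2, hexp, ha1, ha2, hkey, hq1', hq2', hwc', hΔw']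
  have hcover : ∀ x ∈ Q, ∃ i ∈ S, x ∈ Λ i := by
    intro x hx
    obtain ⟨hx1, hx2⟩ := hx
    set j : ℤ := ⌊(x - qc)/d + s⌋ with hj
    have hjlo : lo ≤ j := by
      rw [hj]
      apply Int.le_floor.mpr
      rw [hloR]
      have h7 : -((m:ℝ)/2) ≤ (x - qc)/d := by
        rw [le_div_iff₀ hd0]
        rw [hq1] at hx1; linarith
      linarith
    refine ⟨min j (lo + m - 1), ⟨le_min hjlo (by omega), min_le_right _ _⟩, ?_⟩
    set i : ℤ := min j (lo + m - 1) with hi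
    rw [hΛ]
    have hiR1 : (i:ℝ) ≤ (x - qc)/d + s := by
      calc (i:ℝ) ≤ (j:ℝ) := by exact_mod_cast min_le_left _ _
        _ ≤ _ := Int.floor_le _
    have hiR2 : (x - qc)/d + s ≤ (i:ℝ) + 1 := by
      rcases le_total j (lo + ↑m - 1) with hc | hc
      · rw [hi, min_eq_left hc]
        exact le_of_lt (Int.lt_floor_add_one _)
      · have h8 : (x - qc)/d ≤ (m:ℝ)/2 := by
          rw [div_le_iff₀ hd0]
          rw [hq2] at hx2; linarith
        rw [hi, min_eq_right hc]
        push_cast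
        rw [hloR]
        linarith
    constructor
    · rw [hLdef]
      simp only
      have h9 : ((i:ℝ) - s) ≤ (x - qc)/d := by linarith
      rw [le_div_iff₀ hd0] at h9
      linarith
    · rw [hLdef]
      simp only
      have h9 : (x - qc)/d ≤ ((i:ℝ) - s + 1) := by linarith
      rw [div_le_iff₀ hd0] at h9
      linarith
  refine ⟨⟨{C | ∃ i : ℤ, (Λ i ∩ interior Q).Nonempty ∧ C = Λ i ∩ Q}, Gfun, ?_, ?_, ?_, ?_⟩,
    rfl, hGspec, ?_⟩
  · rw [hcovS]
    exact (Set.finite_Icc lo (lo + m - 1)).image Λ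
  · rintro A ⟨i, hi, rfl⟩
    exact inter_subset_right
  · intro x hx
    obtain ⟨i, hiS, hxi⟩ := hcover x hx
    exact ⟨Λ i ∩ Q, ⟨i, (hvalid i).mpr hiS, rfl⟩, hxi, hx⟩
  · rintro A ⟨i, hi, rfl⟩ x hxA y hy
    rw [hGspec i hi] at hy
    exact hinv i ((hvalid i).mp hi) x hxA.1 y hy
  · show Set.ncard {C | ∃ i : ℤ, (Λ i ∩ interior Q).Nonempty ∧ C = Λ i ∩ Q} = m
    rw [hcovS, Set.ncard_image_of_injOn (fun i _ j _ h => hinj i j h)]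
    rw [hS, ← Finset.coe_Icc, Set.ncard_coe_finset, Int.card_Icc]
    omega
end
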